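/- Let n be a positive integer and F = GF(2^n). For a, b ∈ F with a, b, a+b all nonzero and a ≠ b, the number of x ∈ F satisfying Inv(x+a+b) + Inv(x+a) + Inv(x+b) + Inv(x) = 0 is 4 if a/b satisfies (a/b)^2 + (a/b) + 1 = 0, and 0 otherwise, where Inv(x) = x^(2^n - 2). -/

import Mathlib

theorem stmt_0 {F : Type*} [Field F] [Fintype F] [DecidableEq F] {n : ℕ}
    (hn : 0 < n) (hF : Fintype.card F = 2 ^ n)
    (a b : F) (ha : a ≠ 0) (hb : b ≠ 0) (hab : a + b ≠ 0) (hne : a ≠ b) :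
    (Finset.univ.filter fun x : F =>
      (x + a + b) ^ (2 ^ n - 2) + (x + a) ^ (2 ^ n - 2)
        + (x + b) ^ (2 ^ n - 2) + x ^ (2 ^ n - 2) = 0).card =
    if (a / b) ^ 2 + (a / b) + 1 = 0 then 4 else 0 := by
  -- characteristic 2
  have hchar : ringChar F = 2 := by
    rw [FiniteField.even_card_iff_char_two, hF, Nat.pow_mod]
    simp [hn.ne']
  have htwo : (2 : F) = 0 := by
    have h := CharP.cast_eq_zero F (ringChar F)
    rw [hchar] at h
    exact_mod_cast h
  -- the case n = 1 is vacuous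
  by_cases hn1 : n = 1
  · subst hn1
    have h1 := FiniteField.pow_card_sub_one_eq_one a ha
    have h2 := FiniteField.pow_card_sub_one_eq_one b hb
    rw [hF] at h1 h2
    norm_num at h1 h2
    exact absurd (h1.trans h2.symm) hne
  have hn2 : 2 ≤ n := by omega
  have hq4 : 4 ≤ 2 ^ n := by
    calc (4 : ℕ) = 2 ^ 2 := rfl
    _ ≤ 2 ^ n := Nat.pow_le_pow_right (by norm_num) hn2
  have ht0 : 2 ^ n - 2 ≠ 0 := by omega
  have hinv : ∀ x : F, x ≠ 0 → x ^ (2 ^ n - 2) = x⁻¹ := by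
    intro x hx
    have h1 := FiniteField.pow_card_sub_one_eq_one x hx
    rw [hF] at h1
    apply eq_inv_of_mul_eq_one_left
    rw [← pow_succ, show 2 ^ n - 2 + 1 = 2 ^ n - 1 by omega]
    exact h1
  have hself : ∀ x : F, x + x = 0 := fun x => by linear_combination x * htwo
  have hN : a * b * (a + b) ≠ 0 := mul_ne_zero (mul_ne_zero ha hb) hab
  have hmul0 : ((a + b)⁻¹ + a⁻¹ + b⁻¹) * (a * b * (a + b)) = a ^ 2 + a * b + b ^ 2 := by
    field_simp
    linear_combination (b * a) * htwo
  have hbase : ((a + b)⁻¹ + a⁻¹ + b⁻¹ = 0) ↔ (a ^ 2 + a * b + b ^ 2 = 0) := by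
    constructor
    · intro h; rw [← hmul0, h, zero_mul]
    · intro h
      have h2 := hmul0
      rw [h] at h2
      exact (mul_eq_zero.mp h2).resolve_right hN
  have hcond : ((a / b) ^ 2 + a / b + 1 = 0) ↔ (a ^ 2 + a * b + b ^ 2 = 0) := by
    have hrw : (a / b) ^ 2 + a / b + 1 = (a ^ 2 + a * b + b ^ 2) / b ^ 2 := by
      field_simp
    rw [hrw, div_eq_zero_iff]
    simp [pow_eq_zero_iff, hb]
  have hmulx : ∀ x : F, x ≠ 0 → x + a ≠ 0 → x + b ≠ 0 → x + a + b ≠ 0 →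
      (x⁻¹ + (x + a)⁻¹ + (x + b)⁻¹ + (x + a + b)⁻¹) * (x * (x + a) * (x + b) * (x + a + b))
        = a * b * (a + b) := by
    intro x h1 h2 h3 h4
    field_simp
    linear_combination (2 * x ^ 3 + 3 * (a + b) * x ^ 2 + (a ^ 2 + 3 * a * b + b ^ 2) * x) * htwo
  have key : ∀ x : F,
      ((x + a + b) ^ (2 ^ n - 2) + (x + a) ^ (2 ^ n - 2) + (x + b) ^ (2 ^ n - 2)
          + x ^ (2 ^ n - 2) = 0)
        ↔ ((x = 0 ∨ x = a ∨ x = b ∨ x = a + b) ∧ a ^ 2 + a * b + b ^ 2 = 0) := by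
    intro x
    by_cases hx0 : x = 0
    · subst hx0
      rw [zero_add, zero_add, hinv _ hab, hinv _ ha, hinv _ hb, zero_pow ht0,
        add_zero, hbase]
      simp
    by_cases hxa : x = a
    · rw [hxa, hself a, zero_add, zero_pow ht0, hinv _ hb, hinv _ hab, hinv _ ha]
      constructor
      · intro h
        exact ⟨Or.inr (Or.inl rfl), hbase.mp (by linear_combination h)⟩
      · rintro ⟨-, hc⟩
        linear_combination hbase.mpr hc
    by_cases hxb : x = b
    · rw [hxb, show b + a + b = a from by linear_combination b * htwo, add_comm b a,
        hself b, zero_pow ht0, hinv _ ha, hinv _ hab, hinv _ hb]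
      constructor
      · intro h
        exact ⟨Or.inr (Or.inr (Or.inl rfl)), hbase.mp (by linear_combination h)⟩
      · rintro ⟨-, hc⟩
        linear_combination hbase.mpr hc
    by_cases hxab : x = a + b
    · rw [hxab, show a + b + a + b = 0 from by linear_combination (a + b) * htwo,
        show a + b + a = b from by linear_combination a * htwo,
        show a + b + b = a from by linear_combination b * htwo,
        zero_pow ht0, hinv _ hb, hinv _ ha, hinv _ hab]
      constructor
      · intro h
        exact ⟨Or.inr (Or.inr (Or.inr rfl)), hbase.mp (by linear_combination h)⟩
      · rintro ⟨-, hc⟩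
        linear_combination hbase.mpr hc
    · have hX0 : x ≠ 0 := hx0
      have hXa : x + a ≠ 0 := fun h => hxa (by linear_combination h - a * htwo)
      have hXb : x + b ≠ 0 := fun h => hxb (by linear_combination h - b * htwo)
      have hXab : x + a + b ≠ 0 := fun h => hxab (by linear_combination h - (a + b) * htwo)
      rw [hinv _ hXab, hinv _ hXa, hinv _ hXb, hinv _ hX0]
      constructor
      · intro h
        exfalso
        have hm := hmulx x hX0 hXa hXb hXab
        rw [show x⁻¹ + (x + a)⁻¹ + (x + b)⁻¹ + (x + a + b)⁻¹ = 0 from by linear_combination h,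
          zero_mul] at hm
        exact hN hm.symm
      · rintro ⟨(h | h | h | h), -⟩
        exacts [absurd h hx0, absurd h hxa, absurd h hxb, absurd h hxab]
  have h1 : a ≠ a + b := fun h => hb (by linear_combination -h)
  have h2 : b ≠ a + b := fun h => ha (by linear_combination -h)
  have hset : (Finset.univ.filter fun x : F =>
      (x + a + b) ^ (2 ^ n - 2) + (x + a) ^ (2 ^ n - 2)
        + (x + b) ^ (2 ^ n - 2) + x ^ (2 ^ n - 2) = 0) =
      if a ^ 2 + a * b + b ^ 2 = 0 then ({0, a, b, a + b} : Finset F) else ∅ := by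
    split_ifs with hc
    · ext x
      simp [key x, hc]
    · ext x
      simp [key x, hc]
  rw [hset]
  by_cases hc : a ^ 2 + a * b + b ^ 2 = 0
  · rw [if_pos hc, if_pos (hcond.mpr hc),
      Finset.card_insert_of_notMem (by simp [Ne.symm ha, Ne.symm hb, Ne.symm hab]),
      Finset.card_insert_of_notMem (by simp [hne, h1]),
      Finset.card_insert_of_notMem (by simp [h2]), Finset.card_singleton]
  · rw [if_neg hc, if_neg (fun h => hc (hcond.mp h))]
    exact Finset.card_empty
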